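/- Let X be a pre-Hilbert module over a C*-algebra A and φ a positive linear functional on A. If n ≥ 2 and x₁,…,xₙ, z ∈ X satisfy φ(|z|²)=1, then for every real ζ ≥ 0 and every nonzero complex number α: |∏_{i=1}^{n} φ(⟨x_i,z⟩)|² ≤ (max{1,|α−1|²}/|α|²)·∏_{i=1}^{n} φ(|x_i|²) + (1/(|α|²(1+ζ)))·|φ(⟨x₁,x₂⟩)·∏_{i=3}^{n} φ(⟨x_i,z⟩)|² + ((ζ + 2(1+ζ)·max{1,|α−1|})/(|α|²(1+ζ)))·∏_{i=1}^{n} √(φ(|x_i|²))·|φ(⟨x₁,x₂⟩)·∏_{i=3}^{n} φ(⟨x_i,z⟩)|. -/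

import Mathlib

open scoped ComplexOrder

section BuzanoAux

variable {A X : Type*} [NonUnitalCStarAlgebra A] [PartialOrder A] [StarOrderedRing A]
    [AddCommGroup X] [Module ℂ X] [SMul A X] [Norm X] [CStarModule A X]

lemma phi_star_eq (φ : A →ₗ[ℂ] ℂ) (hφ : ∀ b : A, 0 ≤ b → 0 ≤ φ b) (a : A) :
    φ (star a) = starRingEnd ℂ (φ a) := by
  have hmem : a ∈ Submodule.span ℂ {x : A | 0 ≤ x} := by
    rw [CStarAlgebra.span_nonneg]; trivial
  induction hmem using Submodule.span_induction with
  | mem b hb =>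
      have h1 : star b = b := (IsSelfAdjoint.of_nonneg hb).star_eq
      have h2 : (starRingEnd ℂ) (φ b) = φ b := by
        rw [Complex.conj_eq_iff_im]
        exact (Complex.nonneg_iff.mp (hφ b hb)).2.symm
      rw [h1, h2]
  | zero => simp
  | add b c _ _ hb hc => rw [star_add, map_add, map_add, map_add, hb, hc]
  | smul r b _ hb =>
      simp only [star_smul, map_smul, smul_eq_mul, hb, map_mul, starRingEnd_apply]

lemma phi_re_nonneg (φ : A →ₗ[ℂ] ℂ) (hφ : ∀ b : A, 0 ≤ b → 0 ≤ φ b) (v : X) :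
    0 ≤ (φ (inner A v v : A)).re :=
  (Complex.nonneg_iff.mp (hφ _ CStarModule.inner_self_nonneg)).1

lemma phi_cs (φ : A →ₗ[ℂ] ℂ) (hφ : ∀ b : A, 0 ≤ b → 0 ≤ φ b) (v w : X) :
    ‖φ (inner A v w : A)‖ ^ 2 ≤ (φ (inner A v v : A)).re * (φ (inner A w w : A)).re := by
  letI core : PreInnerProductSpace.Core ℂ X :=
    { inner := fun x y => φ (inner A x y : A)
      conj_inner_symm := fun x y => by
        change (starRingEnd ℂ) (φ (inner A y x : A)) = φ (inner A x y : A)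
        rw [← phi_star_eq φ hφ, CStarModule.star_inner]
      re_inner_nonneg := fun x => phi_re_nonneg φ hφ x
      add_left := fun x y z => by
        change φ (inner A (x + y) z : A) = φ (inner A x z : A) + φ (inner A y z : A)
        rw [CStarModule.inner_add_left, map_add]
      smul_left := fun x y r => by
        change φ (inner A (r • x) y : A) = (starRingEnd ℂ) r * φ (inner A x y : A)
        rw [CStarModule.inner_smul_left_complex, map_smul, smul_eq_mul, starRingEnd_apply] }
  have h := InnerProductSpace.Core.inner_mul_inner_self_le (𝕜 := ℂ) (F := X) v w
  have h' : ‖φ (inner A v w : A)‖ * ‖φ (inner A w v : A)‖ ≤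
      (φ (inner A v v : A)).re * (φ (inner A w w : A)).re := h
  have hsym : ‖φ (inner A w v : A)‖ = ‖φ (inner A v w : A)‖ := by
    rw [← CStarModule.star_inner v w, phi_star_eq φ hφ, Complex.norm_conj]
  rw [hsym] at h'
  nlinarith [h']

lemma phi_cs' (φ : A →ₗ[ℂ] ℂ) (hφ : ∀ b : A, 0 ≤ b → 0 ≤ φ b) (v w : X) :
    ‖φ (inner A v w : A)‖ ≤
      Real.sqrt ((φ (inner A v v : A)).re) * Real.sqrt ((φ (inner A w w : A)).re) := by
  have h := phi_cs φ hφ v w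
  have h1 := Real.sqrt_le_sqrt h
  rwa [Real.sqrt_sq (norm_nonneg _),
    Real.sqrt_mul (phi_re_nonneg φ hφ v)] at h1


end BuzanoAux

set_option maxHeartbeats 1000000 in
/-- Corollary 2.4: Buzano-type inequality in pre-Hilbert `C*`-modules
with parameter `ζ ≥ 0`. -/
theorem buzano_corollary_zeta
    {A X : Type*} [NonUnitalCStarAlgebra A] [PartialOrder A] [StarOrderedRing A]
    [AddCommGroup X] [Module ℂ X] [SMul A X] [Norm X] [CStarModule A X]
    (φ : A →ₗ[ℂ] ℂ) (hφ : ∀ b : A, 0 ≤ b → 0 ≤ φ b)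
    (n : ℕ) (hn : 2 ≤ n) (x : ℕ → X) (z : X)
    (hz : φ (inner A z z : A) = 1)
    (ζ : ℝ) (hζ : 0 ≤ ζ) (α : ℂ) (hα : α ≠ 0) :
    ‖∏ i ∈ Finset.Icc 1 n, φ (inner A (x i) z : A)‖ ^ 2 ≤
      max 1 (‖α - 1‖ ^ 2) / ‖α‖ ^ 2 *
          ∏ i ∈ Finset.Icc 1 n, (φ (inner A (x i) (x i) : A)).re
      + 1 / (‖α‖ ^ 2 * (1 + ζ)) *
          ‖φ (inner A (x 1) (x 2) : A) *
            ∏ i ∈ Finset.Icc 3 n, φ (inner A (x i) z : A)‖ ^ 2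
      + (ζ + 2 * (1 + ζ) * max 1 (‖α - 1‖)) / (‖α‖ ^ 2 * (1 + ζ)) *
          (∏ i ∈ Finset.Icc 1 n, Real.sqrt (φ (inner A (x i) (x i) : A)).re) *
          ‖φ (inner A (x 1) (x 2) : A) *
            ∏ i ∈ Finset.Icc 3 n, φ (inner A (x i) z : A)‖ := by
  have hre : ∀ v : X, 0 ≤ (φ (inner A v v : A)).re := phi_re_nonneg φ hφ
  have hcs' := phi_cs' (X := X) φ hφ
  have hz1 : (φ (inner A z z : A)).re = 1 := by rw [hz]; simp
  have haz : ∀ v : X, ‖φ (inner A v z : A)‖ ≤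
      Real.sqrt ((φ (inner A v v : A)).re) := by
    intro v
    have h := hcs' v z
    rwa [hz1, Real.sqrt_one, mul_one] at h
  set m : ℝ := max 1 (‖α - 1‖) with hm
  have hm1 : (1 : ℝ) ≤ m := le_max_left _ _
  have hm0 : (0 : ℝ) ≤ m := by linarith
  set a2 : ℂ := φ (inner A (x 2) z : A) with ha2def
  have hzx2 : φ (inner A z (x 2) : A) = starRingEnd ℂ a2 := by
    rw [← CStarModule.star_inner (x 2) z, phi_star_eq φ hφ, ha2def]
  set u : X := x 2 - (α * starRingEnd ℂ a2) • z with hu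
  have e1 : φ (inner A (x 1) u : A) = φ (inner A (x 1) (x 2) : A)
      - (α * starRingEnd ℂ a2) * φ (inner A (x 1) z : A) := by
    rw [hu, CStarModule.inner_sub_right, map_sub, CStarModule.inner_smul_right_complex,
      map_smul, smul_eq_mul]
  have e2 : φ (inner A u u : A) = φ (inner A (x 2) (x 2) : A)
      + (α * starRingEnd ℂ α - α - starRingEnd ℂ α) * (a2 * starRingEnd ℂ a2) := by
    rw [hu]
    simp only [CStarModule.inner_sub_right, CStarModule.inner_sub_left,
      CStarModule.inner_smul_right_complex, CStarModule.inner_smul_left_complex,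
      map_sub, map_smul, smul_eq_mul, hz, hzx2, ← ha2def, star_mul', Complex.star_def,
      Complex.conj_conj, mul_one]
    ring
  have hαconj : α * starRingEnd ℂ α - α - starRingEnd ℂ α
      = ((‖α - 1‖ ^ 2 - 1 : ℝ) : ℂ) := by
    apply Complex.ext <;>
      simp [Complex.sq_norm, Complex.normSq_apply, Complex.mul_re, Complex.mul_im] <;> ring
  have ha2abs : a2 * starRingEnd ℂ a2 = ((‖a2‖ ^ 2 : ℝ) : ℂ) := by
    rw [Complex.mul_conj, Complex.sq_norm]
  have e2re : (φ (inner A u u : A)).re = (φ (inner A (x 2) (x 2) : A)).re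
      + (‖α - 1‖ ^ 2 - 1) * ‖a2‖ ^ 2 := by
    rw [e2, hαconj, ha2abs, ← Complex.ofReal_mul, Complex.add_re, Complex.ofReal_re]
  have ha2r : ‖a2‖ ^ 2 ≤ (φ (inner A (x 2) (x 2) : A)).re := by
    have h := phi_cs φ hφ (x 2) z
    rwa [hz1, mul_one] at h
  have huu : (φ (inner A u u : A)).re ≤ m ^ 2 * (φ (inner A (x 2) (x 2) : A)).re := by
    rcases le_total (‖α - 1‖) 1 with h | h
    · have hme : m = 1 := max_eq_left h
      have h2 : ‖α - 1‖ ^ 2 ≤ 1 := by nlinarith [norm_nonneg (α - 1)]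
      have h3 : 0 ≤ (1 - ‖α - 1‖ ^ 2) * ‖a2‖ ^ 2 :=
        mul_nonneg (by linarith) (sq_nonneg _)
      rw [e2re, hme]
      nlinarith [h3]
    · have hme : m = ‖α - 1‖ := max_eq_right h
      have h2 : 1 ≤ ‖α - 1‖ ^ 2 := by nlinarith
      have h3 : 0 ≤ (‖α - 1‖ ^ 2 - 1) *
          ((φ (inner A (x 2) (x 2) : A)).re - ‖a2‖ ^ 2) :=
        mul_nonneg (by linarith) (by linarith [ha2r])
      rw [e2re, hme]
      nlinarith [h3]
  have hBuz : ‖α * (φ (inner A (x 1) z : A) * starRingEnd ℂ a2)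
        - φ (inner A (x 1) (x 2) : A)‖
      ≤ m * (Real.sqrt ((φ (inner A (x 1) (x 1) : A)).re) *
          Real.sqrt ((φ (inner A (x 2) (x 2) : A)).re)) := by
    have key : α * (φ (inner A (x 1) z : A) * starRingEnd ℂ a2) - φ (inner A (x 1) (x 2) : A)
        = -(φ (inner A (x 1) u : A)) := by rw [e1]; ring
    rw [key, norm_neg]
    have hs : Real.sqrt ((φ (inner A u u : A)).re)
        ≤ m * Real.sqrt ((φ (inner A (x 2) (x 2) : A)).re) := by
      have h1 := Real.sqrt_le_sqrt huu
      rwa [Real.sqrt_mul (sq_nonneg m), Real.sqrt_sq hm0] at h1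
    calc ‖φ (inner A (x 1) u : A)‖
        ≤ Real.sqrt ((φ (inner A (x 1) (x 1) : A)).re) * Real.sqrt ((φ (inner A u u : A)).re) :=
          hcs' (x 1) u
      _ ≤ Real.sqrt ((φ (inner A (x 1) (x 1) : A)).re) *
            (m * Real.sqrt ((φ (inner A (x 2) (x 2) : A)).re)) := by
          exact mul_le_mul_of_nonneg_left hs (Real.sqrt_nonneg _)
      _ = m * (Real.sqrt ((φ (inner A (x 1) (x 1) : A)).re) *
            Real.sqrt ((φ (inner A (x 2) (x 2) : A)).re)) := by ring
  -- split products
  have hsplit : Finset.Icc 1 n = insert 1 (insert 2 (Finset.Icc 3 n)) := by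
    ext i; simp only [Finset.mem_Icc, Finset.mem_insert]; omega
  have h1ni : (1 : ℕ) ∉ insert 2 (Finset.Icc 3 n) := by simp [Finset.mem_Icc]
  have h2ni : (2 : ℕ) ∉ Finset.Icc 3 n := by simp
  have hmax : max 1 (‖α - 1‖ ^ 2) = m ^ 2 := by
    rcases le_total (‖α - 1‖) 1 with h | h
    · rw [hm, max_eq_left h, max_eq_left (by nlinarith [norm_nonneg (α - 1)])]
      norm_num
    · rw [hm, max_eq_right h, max_eq_right (by nlinarith [norm_nonneg (α - 1)])]
  simp only [hsplit, Finset.prod_insert h1ni, Finset.prod_insert h2ni]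
  rw [← ha2def, hmax]
  -- real-variable abbreviations (as plain terms)
  have hV0 : (0 : ℝ) ≤ ∏ i ∈ Finset.Icc 3 n, Real.sqrt ((φ (inner A (x i) (x i) : A)).re) :=
    Finset.prod_nonneg fun i _ => Real.sqrt_nonneg _
  have hq : (∏ i ∈ Finset.Icc 3 n, Real.sqrt ((φ (inner A (x i) (x i) : A)).re)) ^ 2
      = ∏ i ∈ Finset.Icc 3 n, (φ (inner A (x i) (x i) : A)).re := by
    rw [← Finset.prod_pow]
    exact Finset.prod_congr rfl fun i _ => Real.sq_sqrt (hre (x i))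
  have hQV : ‖∏ i ∈ Finset.Icc 3 n, φ (inner A (x i) z : A)‖
      ≤ ∏ i ∈ Finset.Icc 3 n, Real.sqrt ((φ (inner A (x i) (x i) : A)).re) := by
    rw [norm_prod]
    exact Finset.prod_le_prod (fun i _ => norm_nonneg _) fun i _ => haz (x i)
  have hw : ‖φ (inner A (x 1) (x 2) : A) *
        ∏ i ∈ Finset.Icc 3 n, φ (inner A (x i) z : A)‖
      ≤ (Real.sqrt ((φ (inner A (x 1) (x 1) : A)).re) *
          Real.sqrt ((φ (inner A (x 2) (x 2) : A)).re)) *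
        ∏ i ∈ Finset.Icc 3 n, Real.sqrt ((φ (inner A (x i) (x i) : A)).re) := by
    rw [norm_mul]
    exact mul_le_mul (hcs' (x 1) (x 2)) hQV (norm_nonneg _)
      (by positivity)
  have hT : ‖α‖ * ‖φ (inner A (x 1) z : A) *
        (a2 * ∏ i ∈ Finset.Icc 3 n, φ (inner A (x i) z : A))‖
      ≤ m * (Real.sqrt ((φ (inner A (x 1) (x 1) : A)).re) *
            Real.sqrt ((φ (inner A (x 2) (x 2) : A)).re)) *
          ‖∏ i ∈ Finset.Icc 3 n, φ (inner A (x i) z : A)‖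
        + ‖φ (inner A (x 1) (x 2) : A) *
            ∏ i ∈ Finset.Icc 3 n, φ (inner A (x i) z : A)‖ := by
    have t1 : ‖α * (φ (inner A (x 1) z : A) * starRingEnd ℂ a2)‖
        ≤ ‖α * (φ (inner A (x 1) z : A) * starRingEnd ℂ a2)
            - φ (inner A (x 1) (x 2) : A)‖ + ‖φ (inner A (x 1) (x 2) : A)‖ := by
      have h := norm_add_le (α * (φ (inner A (x 1) z : A) * starRingEnd ℂ a2)
        - φ (inner A (x 1) (x 2) : A)) (φ (inner A (x 1) (x 2) : A))
      simpa using h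
    calc ‖α‖ * ‖φ (inner A (x 1) z : A) *
          (a2 * ∏ i ∈ Finset.Icc 3 n, φ (inner A (x i) z : A))‖
        = ‖α * (φ (inner A (x 1) z : A) * starRingEnd ℂ a2)‖ *
            ‖∏ i ∈ Finset.Icc 3 n, φ (inner A (x i) z : A)‖ := by
          rw [norm_mul, norm_mul, norm_mul, norm_mul, Complex.norm_conj]; ring
      _ ≤ (‖α * (φ (inner A (x 1) z : A) * starRingEnd ℂ a2)
            - φ (inner A (x 1) (x 2) : A)‖ + ‖φ (inner A (x 1) (x 2) : A)‖) *
            ‖∏ i ∈ Finset.Icc 3 n, φ (inner A (x i) z : A)‖ :=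
          mul_le_mul_of_nonneg_right t1 (norm_nonneg _)
      _ ≤ (m * (Real.sqrt ((φ (inner A (x 1) (x 1) : A)).re) *
            Real.sqrt ((φ (inner A (x 2) (x 2) : A)).re))
            + ‖φ (inner A (x 1) (x 2) : A)‖) *
            ‖∏ i ∈ Finset.Icc 3 n, φ (inner A (x i) z : A)‖ :=
          mul_le_mul_of_nonneg_right (by linarith [hBuz]) (norm_nonneg _)
      _ = m * (Real.sqrt ((φ (inner A (x 1) (x 1) : A)).re) *
              Real.sqrt ((φ (inner A (x 2) (x 2) : A)).re)) *
            ‖∏ i ∈ Finset.Icc 3 n, φ (inner A (x i) z : A)‖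
          + ‖φ (inner A (x 1) (x 2) : A)‖ *
            ‖∏ i ∈ Finset.Icc 3 n, φ (inner A (x i) z : A)‖ := by ring
      _ = _ := by rw [norm_mul]
  have hA0 : 0 < ‖α‖ := norm_pos_iff.mpr hα
  have h1ζ : (0 : ℝ) < 1 + ζ := by linarith
  have key : ‖φ (inner A (x 1) z : A) *
        (a2 * ∏ i ∈ Finset.Icc 3 n, φ (inner A (x i) z : A))‖ ^ 2 *
        (‖α‖ ^ 2 * (1 + ζ))
      ≤ (1 + ζ) * m ^ 2 *
          ((Real.sqrt ((φ (inner A (x 1) (x 1) : A)).re) *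
            Real.sqrt ((φ (inner A (x 2) (x 2) : A)).re)) *
            ∏ i ∈ Finset.Icc 3 n, Real.sqrt ((φ (inner A (x i) (x i) : A)).re)) ^ 2
        + ‖φ (inner A (x 1) (x 2) : A) *
            ∏ i ∈ Finset.Icc 3 n, φ (inner A (x i) z : A)‖ ^ 2
        + (ζ + 2 * (1 + ζ) * m) *
            (((Real.sqrt ((φ (inner A (x 1) (x 1) : A)).re) *
              Real.sqrt ((φ (inner A (x 2) (x 2) : A)).re)) *
              ∏ i ∈ Finset.Icc 3 n, Real.sqrt ((φ (inner A (x i) (x i) : A)).re)) *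
             ‖φ (inner A (x 1) (x 2) : A) *
               ∏ i ∈ Finset.Icc 3 n, φ (inner A (x i) z : A)‖) := by
    have hstep : m * (Real.sqrt ((φ (inner A (x 1) (x 1) : A)).re) *
          Real.sqrt ((φ (inner A (x 2) (x 2) : A)).re)) *
          ‖∏ i ∈ Finset.Icc 3 n, φ (inner A (x i) z : A)‖
        ≤ m * (Real.sqrt ((φ (inner A (x 1) (x 1) : A)).re) *
          Real.sqrt ((φ (inner A (x 2) (x 2) : A)).re)) *
          ∏ i ∈ Finset.Icc 3 n, Real.sqrt ((φ (inner A (x i) (x i) : A)).re) :=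
      mul_le_mul_of_nonneg_left hQV (by positivity)
    have h1 : ‖α‖ * ‖φ (inner A (x 1) z : A) *
          (a2 * ∏ i ∈ Finset.Icc 3 n, φ (inner A (x i) z : A))‖
        ≤ m * (Real.sqrt ((φ (inner A (x 1) (x 1) : A)).re) *
            Real.sqrt ((φ (inner A (x 2) (x 2) : A)).re)) *
            (∏ i ∈ Finset.Icc 3 n, Real.sqrt ((φ (inner A (x i) (x i) : A)).re))
          + ‖φ (inner A (x 1) (x 2) : A) *
              ∏ i ∈ Finset.Icc 3 n, φ (inner A (x i) z : A)‖ := by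
      linarith [hT, hstep]
    have h2 := pow_le_pow_left₀ (by positivity) h1 2
    have h3 : ζ * (‖φ (inner A (x 1) (x 2) : A) *
          ∏ i ∈ Finset.Icc 3 n, φ (inner A (x i) z : A)‖ *
          ‖φ (inner A (x 1) (x 2) : A) *
          ∏ i ∈ Finset.Icc 3 n, φ (inner A (x i) z : A)‖)
        ≤ ζ * (((Real.sqrt ((φ (inner A (x 1) (x 1) : A)).re) *
            Real.sqrt ((φ (inner A (x 2) (x 2) : A)).re)) *
            ∏ i ∈ Finset.Icc 3 n, Real.sqrt ((φ (inner A (x i) (x i) : A)).re)) *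
            ‖φ (inner A (x 1) (x 2) : A) *
              ∏ i ∈ Finset.Icc 3 n, φ (inner A (x i) z : A)‖) :=
      mul_le_mul_of_nonneg_left
        (mul_le_mul_of_nonneg_right hw (norm_nonneg _)) hζ
    nlinarith [mul_le_mul_of_nonneg_left h2 (le_of_lt h1ζ), h3]
  have key2 : ‖φ (inner A (x 1) z : A) *
        (a2 * ∏ i ∈ Finset.Icc 3 n, φ (inner A (x i) z : A))‖ ^ 2
      ≤ ((1 + ζ) * m ^ 2 *
          ((Real.sqrt ((φ (inner A (x 1) (x 1) : A)).re) *
            Real.sqrt ((φ (inner A (x 2) (x 2) : A)).re)) *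
            ∏ i ∈ Finset.Icc 3 n, Real.sqrt ((φ (inner A (x i) (x i) : A)).re)) ^ 2
        + ‖φ (inner A (x 1) (x 2) : A) *
            ∏ i ∈ Finset.Icc 3 n, φ (inner A (x i) z : A)‖ ^ 2
        + (ζ + 2 * (1 + ζ) * m) *
            (((Real.sqrt ((φ (inner A (x 1) (x 1) : A)).re) *
              Real.sqrt ((φ (inner A (x 2) (x 2) : A)).re)) *
              ∏ i ∈ Finset.Icc 3 n, Real.sqrt ((φ (inner A (x i) (x i) : A)).re)) *
             ‖φ (inner A (x 1) (x 2) : A) *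
               ∏ i ∈ Finset.Icc 3 n, φ (inner A (x i) z : A)‖)) /
        (‖α‖ ^ 2 * (1 + ζ)) := by
    rw [le_div_iff₀ (by positivity)]
    exact key
  refine key2.trans (le_of_eq ?_)
  have hconv : (φ (inner A (x 1) (x 1) : A)).re * ((φ (inner A (x 2) (x 2) : A)).re *
        ∏ i ∈ Finset.Icc 3 n, (φ (inner A (x i) (x i) : A)).re)
      = ((Real.sqrt ((φ (inner A (x 1) (x 1) : A)).re) *
          Real.sqrt ((φ (inner A (x 2) (x 2) : A)).re)) *
          ∏ i ∈ Finset.Icc 3 n, Real.sqrt ((φ (inner A (x i) (x i) : A)).re)) ^ 2 := by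
    rw [mul_pow, mul_pow, Real.sq_sqrt (hre (x 1)), Real.sq_sqrt (hre (x 2)), hq]
    ring
  rw [hconv]
  field_simp
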